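/- Let C : ℝ → Matrix (Fin m) (Fin m) ℂ be continuous with C(t) Hermitian (C(t)* = C(t)) for every t, and let V : ℝ → Matrix (Fin m) (Fin m) ℂ be differentiable with V(0) = 1 and i·V′(t) = C(t) · V(t) for all t. Then V(t) is a unitary matrix for every t. -/

import Mathlib

open Matrix
/-- The solution of `i·V′(t) = C(t)·V(t)`, `V(0) = 1`, with `C(t)` Hermitian, is unitary
for every `t`. Differentiability is entrywise. -/
theorem ode_solution_unitary
    (m : ℕ) (C : ℝ → Matrix (Fin m) (Fin m) ℂ)
    (hCcont : ∀ p k, Continuous fun t => C t p k)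
    (hCherm : ∀ t, (C t)ᴴ = C t)
    (V V' : ℝ → Matrix (Fin m) (Fin m) ℂ)
    (hV0 : V 0 = 1)
    (hVderiv : ∀ t p k, HasDerivAt (fun s => V s p k) (V' t p k) t)
    (hVode : ∀ t, Complex.I • V' t = C t * V t) :
    ∀ t, (V t)ᴴ * V t = 1 ∧ V t * (V t)ᴴ = 1 := by
  -- key: V' t = (-I) • (C t * V t)
  have hV' : ∀ t, V' t = (-Complex.I) • (C t * V t) := by
    intro t
    have h := hVode t
    calc V' t = (-Complex.I) • (Complex.I • V' t) := by
          rw [smul_smul]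
          simp [Complex.I_mul_I]
      _ = (-Complex.I) • (C t * V t) := by rw [h]
  -- the matrix derivative of Vᴴ V is 0
  have hkey : ∀ t, (V' t)ᴴ * V t + (V t)ᴴ * V' t = 0 := by
    intro t
    rw [hV' t, conjTranspose_smul, conjTranspose_mul, hCherm t]
    simp only [star_neg, Complex.star_def, Complex.conj_I, neg_neg]
    rw [Matrix.smul_mul, Matrix.mul_smul, mul_assoc]
    simp [smul_smul]
  -- entrywise: fun t => ((V t)ᴴ * V t) p k has derivative 0
  have hconst : ∀ p k t, ((V t)ᴴ * V t) p k = ((V 0)ᴴ * V 0) p k := by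
    intro p k
    have hg : ∀ t, HasDerivAt (fun s => ((V s)ᴴ * V s) p k)
        (((V' t)ᴴ * V t + (V t)ᴴ * V' t) p k) t := by
      intro t
      have : HasDerivAt (fun s => ∑ j, (starRingEnd ℂ) (V s j p) * V s j k)
          (∑ j, ((starRingEnd ℂ) (V' t j p) * V t j k
              + (starRingEnd ℂ) (V t j p) * V' t j k)) t := by
        apply HasDerivAt.fun_sum
        intro j _
        exact ((hVderiv t j p).star.mul (hVderiv t j k))
      have hf : (fun s => ((V s)ᴴ * V s) p k)
          = fun s => ∑ j, (starRingEnd ℂ) (V s j p) * V s j k := by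
        funext s
        simp [Matrix.mul_apply, Matrix.conjTranspose_apply]
      have hv : (((V' t)ᴴ * V t + (V t)ᴴ * V' t) p k)
          = ∑ j, ((starRingEnd ℂ) (V' t j p) * V t j k
              + (starRingEnd ℂ) (V t j p) * V' t j k) := by
        simp only [Matrix.add_apply, Matrix.mul_apply, Matrix.conjTranspose_apply]
        exact Finset.sum_add_distrib.symm
      rw [hf, hv]
      exact this
    have hzero : ∀ t, HasDerivAt (fun s => ((V s)ᴴ * V s) p k) 0 t := by
      intro t
      have := hg t
      rwa [hkey t, Matrix.zero_apply] at this
    intro t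
    exact is_const_of_deriv_eq_zero
      (fun x => (hzero x).differentiableAt) (fun x => (hzero x).deriv) t 0
  intro t
  have h1 : (V t)ᴴ * V t = 1 := by
    ext p k
    rw [hconst p k t, hV0]
    simp
  exact ⟨h1, mul_eq_one_comm.mp h1⟩
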